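/- Let v be a tangential differentiable vector field on S² and v_E(x) := |x| v(x/|x|). Then (v_E·∇)v_E(x) = |x| { (∇_v v)(x/|x|) − |v(x/|x|)|² (x/|x|) } for x ∈ ℝ³ \ {0}, where ∇_v v = P[(v·∇_{S²})v] is the covariant derivative of v along itself. -/

import Mathlib

open MeasureTheory Matrix
open scoped RealInnerProductSpace

noncomputable section

abbrev E3 : Type := EuclideanSpace ℝ (Fin 3)

def proj3 (y : E3) : Matrix (Fin 3) (Fin 3) ℝ :=
  Matrix.of fun i j => (if i = j then (1:ℝ) else 0) - y i * y j

def pd (f : E3 → ℝ) (x : E3) (i : Fin 3) : ℝ :=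
  fderiv ℝ f x (EuclideanSpace.single i 1)

def gradM (u : E3 → E3) (x : E3) : Matrix (Fin 3) (Fin 3) ℝ :=
  Matrix.of fun i j => fderiv ℝ (fun z => u z j) x (EuclideanSpace.single i 1)

def symM (A : Matrix (Fin 3) (Fin 3) ℝ) : Matrix (Fin 3) (Fin 3) ℝ :=
  (1/2 : ℝ) • (A + Aᵀ)

def tgradM (u : E3 → E3) (y : E3) : Matrix (Fin 3) (Fin 3) ℝ :=
  proj3 y * gradM u y

def strainS (u : E3 → E3) (y : E3) : Matrix (Fin 3) (Fin 3) ℝ :=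
  proj3 y * symM (tgradM u y) * proj3 y

def vE (v : E3 → E3) (x : E3) : E3 := ‖x‖ • v (‖x‖⁻¹ • x)

def ra (a : E3) : E3 → E3 := fun x => WithLp.toLp 2 (crossProduct a x)

def shell (ε : ℝ) : Set E3 := {x : E3 | 1 < ‖x‖ ∧ ‖x‖ < 1 + ε}

def sphM : Measure E3 := (Measure.hausdorffMeasure 2 : Measure E3).restrict (Metric.sphere (0:E3) 1)

def avg (ε : ℝ) (k : ℕ) (φ : E3 → ℝ) (y : E3) : ℝ :=
  (1/ε) * ∫ r in (1:ℝ)..(1+ε), φ (r • y) * r ^ k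

def avgV (ε : ℝ) (k : ℕ) (u : E3 → E3) (y : E3) : E3 :=
  WithLp.toLp 2 (fun j => (1/ε) * ∫ r in (1:ℝ)..(1+ε), u (r • y) j * r ^ k)

def div3 (u : E3 → E3) (x : E3) : ℝ :=
  ∑ i, fderiv ℝ (fun z => u z i) x (EuclideanSpace.single i 1)

def sdiv (F : E3 → E3) (y : E3) : ℝ :=
  ∑ j, ∑ i, proj3 y j i * fderiv ℝ (fun x => F (‖x‖⁻¹ • x) j) y (EuclideanSpace.single i 1)

def frob2 (A : Matrix (Fin 3) (Fin 3) ℝ) : ℝ := ∑ i, ∑ j, (A i j)^2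




lemma hasFDerivAt_norm' (x : E3) (hx : x ≠ 0) :
    HasFDerivAt (fun z : E3 => ‖z‖) (‖x‖⁻¹ • (innerSL ℝ x)) x := by
  have h1 : HasFDerivAt (fun z : E3 => ‖z‖ ^ 2) ((2:ℕ) • innerSL ℝ x) x :=
    (hasStrictFDerivAt_norm_sq x).hasFDerivAt
  have hx0 : ‖x‖ ≠ 0 := norm_ne_zero_iff.mpr hx
  have hns : ‖x‖ ^ 2 ≠ 0 := pow_ne_zero 2 hx0
  have h2 := (Real.hasDerivAt_sqrt hns).comp_hasFDerivAt x h1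
  have he : (fun z : E3 => Real.sqrt (‖z‖ ^ 2)) = fun z : E3 => ‖z‖ := by
    funext z; rw [Real.sqrt_sq (norm_nonneg z)]
  rw [show ((fun x => √x) ∘ fun z : E3 => ‖z‖ ^ 2) = fun z : E3 => ‖z‖ from he] at h2
  refine h2.congr_fderiv ?_
  ext e
  rw [Real.sqrt_sq (norm_nonneg x)]
  simp only [ContinuousLinearMap.smul_apply, ContinuousLinearMap.coe_smul', Pi.smul_apply,
    smul_eq_mul, nsmul_eq_mul, Nat.cast_ofNat]
  field_simp

/-- Derivative of the radial projection `z ↦ z/‖z‖`. -/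
lemma hasFDerivAt_unitmap (x : E3) (hx : x ≠ 0) :
    HasFDerivAt (fun z : E3 => ‖z‖⁻¹ • z)
      (‖x‖⁻¹ • (ContinuousLinearMap.id ℝ E3 -
        (innerSL ℝ (‖x‖⁻¹ • x)).smulRight (‖x‖⁻¹ • x))) x := by
  have hx0 : ‖x‖ ≠ 0 := norm_ne_zero_iff.mpr hx
  have hc : HasFDerivAt (fun z : E3 => ‖z‖⁻¹)
      ((-((‖x‖ : ℝ) ^ 2)⁻¹) • (‖x‖⁻¹ • innerSL ℝ x)) x :=
    (hasDerivAt_inv hx0).comp_hasFDerivAt x (hasFDerivAt_norm' x hx)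
  have h := hc.smul (hasFDerivAt_id x)
  refine h.congr_fderiv ?_
  ext e
  simp only [ContinuousLinearMap.add_apply, ContinuousLinearMap.smul_apply,
    ContinuousLinearMap.coe_smul', Pi.smul_apply, ContinuousLinearMap.smulRight_apply,
    ContinuousLinearMap.coe_id', id_eq, ContinuousLinearMap.sub_apply,
    ContinuousLinearMap.coe_sub', Pi.sub_apply, innerSL_apply_apply, smul_eq_mul,
    neg_smul, smul_smul, inner_smul_left, map_inv₀, RCLike.inv_re, conj_trivial]
  simp only [PiLp.smul_apply, PiLp.sub_apply, PiLp.add_apply, smul_eq_mul]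
  field_simp
  ring

lemma sum_single_eq (w : E3) :
    ∑ m : Fin 3, w m • (EuclideanSpace.single m (1:ℝ)) = w := by
  ext i
  fin_cases i <;> simp [Fin.sum_univ_three, EuclideanSpace.single_apply]

lemma inner_eq_sum (a b : E3) : ⟪a, b⟫ = ∑ i, a i * b i := by
  simp [PiLp.inner_apply, RCLike.inner_apply, conj_trivial]
  exact Finset.sum_congr rfl fun _ _ => mul_comm _ _

/-- Key tangency identity: `⟪y, Dv(v y)⟫ = -‖v y‖²` for tangential `v`. -/
lemma key_tangent (v : E3 → E3) (y : E3) (hny : ‖y‖ = 1)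
    (hv : DifferentiableAt ℝ v y)
    (hvt : ∀ z : E3, ‖z‖ = 1 → ⟪v z, z⟫ = 0) :
    ⟪fderiv ℝ v y (v y), y⟫ + ‖v y‖ ^ 2 = 0 := by
  set w := v y with hw
  have hy0 : y ≠ 0 := by intro h; rw [h] at hny; simp at hny
  have hwy : ⟪w, y⟫ = 0 := hvt y hny
  -- the curve γ s = (y + s w)/‖y + s w‖
  set γ : ℝ → E3 := fun s => ‖y + s • w‖⁻¹ • (y + s • w) with hγdef
  have hline : HasDerivAt (fun s : ℝ => y + s • w) w 0 := by
    simpa using ((hasDerivAt_id (0:ℝ)).smul_const w).const_add y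
  have hne : ∀ s : ℝ, y + s • w ≠ 0 := by
    intro s h
    have : ⟪y + s • w, y⟫ = 0 := by rw [h]; simp
    rw [inner_add_left, real_inner_smul_left, hwy] at this
    have h2 : ⟪y, y⟫ = (0:ℝ) := by simpa using this
    rw [real_inner_self_eq_norm_sq, hny] at h2; norm_num at h2
  have hγ0 : γ 0 = y := by simp [hγdef, hny]
  have hγunit : ∀ s, ‖γ s‖ = 1 := by
    intro s
    rw [hγdef]
    rw [norm_smul, norm_inv, norm_norm, inv_mul_cancel₀ (norm_ne_zero_iff.mpr (hne s))]
  have hγ' : HasDerivAt γ w 0 := by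
    have hcomp := (hasFDerivAt_unitmap y hy0).comp_hasDerivAt_of_eq 0 hline (by simp)
    simp only [zero_smul, add_zero] at hcomp
    have : (‖y‖⁻¹ • (ContinuousLinearMap.id ℝ E3 -
        (innerSL ℝ (‖y‖⁻¹ • y)).smulRight (‖y‖⁻¹ • y))) w = w := by
      rw [hny]
      simp only [inv_one, one_smul, ContinuousLinearMap.sub_apply,
        ContinuousLinearMap.coe_id', id_eq, ContinuousLinearMap.smulRight_apply, innerSL_apply_apply]
      rw [real_inner_comm y w] at hwy
      rw [hwy]; simp
    rw [this] at hcomp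
    exact hcomp
  have hvγ : HasDerivAt (fun s => v (γ s)) (fderiv ℝ v y w) 0 := by
    have := hv.hasFDerivAt.comp_hasDerivAt_of_eq 0 hγ' hγ0.symm
    exact this
  have hin : HasDerivAt (fun s => ⟪v (γ s), γ s⟫)
      (⟪v (γ 0), w⟫ + ⟪fderiv ℝ v y w, γ 0⟫) 0 := hvγ.inner ℝ hγ'
  have hzero : (fun s => ⟪v (γ s), γ s⟫) = fun _ => (0:ℝ) := by
    funext s; exact hvt (γ s) (hγunit s)
  rw [hzero] at hin
  have := hin.unique (hasDerivAt_const 0 0)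
  rw [hγ0] at this
  rw [← hw] at this
  rw [← real_inner_self_eq_norm_sq]
  linarith [this]

lemma inner_single' (a : E3) (i : Fin 3) : ⟪a, EuclideanSpace.single i (1:ℝ)⟫ = a i := by
  simp [PiLp.inner_apply, RCLike.inner_apply, conj_trivial, EuclideanSpace.single_apply]


/-- `(v_E·∇)v_E(x) = |x| { (∇_v v)(x/|x|) − |v(x/|x|)|² (x/|x|) }` for tangential `v`. -/
theorem stmt10 (v : E3 → E3) (x : E3) (hx : x ≠ 0)
    (hv : DifferentiableAt ℝ v (‖x‖⁻¹ • x))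
    (hvt : ∀ z : E3, ‖z‖ = 1 → ⟪v z, z⟫ = 0) :
    ∀ j : Fin 3,
      (∑ i, vE v x i * fderiv ℝ (fun z => vE v z j) x (EuclideanSpace.single i 1))
        = ‖x‖ * ((∑ k, proj3 (‖x‖⁻¹ • x) j k
              * ∑ i, v (‖x‖⁻¹ • x) i * tgradM v (‖x‖⁻¹ • x) i k)
            - ‖v (‖x‖⁻¹ • x)‖^2 * (‖x‖⁻¹ • x) j) := by
  intro j
  have hx0 : ‖x‖ ≠ 0 := norm_ne_zero_iff.mpr hx
  set y : E3 := ‖x‖⁻¹ • x with hy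
  have hny : ‖y‖ = 1 := by
    rw [hy, norm_smul, norm_inv, norm_norm, inv_mul_cancel₀ hx0]
  set Dv : E3 →L[ℝ] E3 := fderiv ℝ v y with hDv
  set d : Fin 3 → Fin 3 → ℝ := fun m k => Dv (EuclideanSpace.single m 1) k with hd
  -- coordinates of Dv applied to a vector
  have hDlin : ∀ (u : E3) (k : Fin 3), Dv u k = ∑ m, u m * d m k := by
    intro u k
    conv_lhs => rw [← sum_single_eq u]
    rw [map_sum]
    rw [show ((∑ m, Dv (u m • EuclideanSpace.single m (1:ℝ))) k)
        = ∑ m, (Dv (u m • EuclideanSpace.single m (1:ℝ))) k from by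
      rw [Fin.sum_univ_three, Fin.sum_univ_three]; rfl]
    refine Finset.sum_congr rfl fun m _ => ?_
    rw [_root_.map_smul]
    rfl
  -- fderiv of coordinate functions
  have hcoordd : ∀ (m k : Fin 3),
      fderiv ℝ (fun z => v z k) y (EuclideanSpace.single m 1) = d m k := by
    intro m k
    have h := ((EuclideanSpace.proj (𝕜 := ℝ) k).hasFDerivAt (x := v y)).comp y hv.hasFDerivAt
    rw [show (fun z => v z k) = (⇑(EuclideanSpace.proj (𝕜 := ℝ) k) ∘ v) from rfl, h.fderiv]
    rfl
  -- derivative of the j-th coordinate of vE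
  have hD : ∀ i : Fin 3, fderiv ℝ (fun z => vE v z j) x (EuclideanSpace.single i 1)
      = v y j * y i + d i j - y i * (∑ m, y m * d m j) := by
    intro i
    have hG := hasFDerivAt_unitmap x hx
    have hcompv : HasFDerivAt (fun z : E3 => v (‖z‖⁻¹ • z)) (Dv.comp
        (‖x‖⁻¹ • (ContinuousLinearMap.id ℝ E3 -
          (innerSL ℝ (‖x‖⁻¹ • x)).smulRight (‖x‖⁻¹ • x)))) x :=
      hv.hasFDerivAt.comp x hG
    have hwj : HasFDerivAt (fun z : E3 => v (‖z‖⁻¹ • z) j)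
        ((EuclideanSpace.proj (𝕜 := ℝ) j).comp (Dv.comp
          (‖x‖⁻¹ • (ContinuousLinearMap.id ℝ E3 -
            (innerSL ℝ (‖x‖⁻¹ • x)).smulRight (‖x‖⁻¹ • x))))) x :=
      ((EuclideanSpace.proj (𝕜 := ℝ) j).hasFDerivAt).comp x hcompv
    have hN := hasFDerivAt_norm' x hx
    have hprod := hN.mul hwj
    have heq : (fun z : E3 => vE v z j) = fun z : E3 => ‖z‖ * v (‖z‖⁻¹ • z) j := rfl
    rw [heq, show (fun z : E3 => ‖z‖ * v (‖z‖⁻¹ • z) j) = ((fun z : E3 => ‖z‖) * fun z => v (‖z‖⁻¹ • z) j) from rfl, hprod.fderiv]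
    simp only [ContinuousLinearMap.add_apply, ContinuousLinearMap.smul_apply,
      ContinuousLinearMap.coe_smul', Pi.smul_apply, ContinuousLinearMap.coe_comp',
      Function.comp_apply, ContinuousLinearMap.sub_apply, ContinuousLinearMap.coe_id', id_eq,
      ContinuousLinearMap.smulRight_apply, innerSL_apply_apply, PiLp.proj_apply,
      smul_eq_mul]
    rw [← hy]
    rw [inner_single' y i]
    have h1 : ⟪x, EuclideanSpace.single i (1:ℝ)⟫ = x i := inner_single' x i
    rw [h1]
    have hxi : x i = ‖x‖ * y i := by
      rw [hy]; simp only [PiLp.smul_apply, smul_eq_mul]; field_simp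
    rw [_root_.map_smul]
    have h2 : (Dv (EuclideanSpace.single i 1 - y i • y)) j
        = d i j - y i * (∑ m, y m * d m j) := by
      rw [map_sub, _root_.map_smul]
      have : (Dv (EuclideanSpace.single i 1) - y i • Dv y) j
          = d i j - y i * (Dv y j) := rfl
      rw [this, hDlin y j]
    have h3 : (‖x‖⁻¹ • Dv (EuclideanSpace.single i 1 - y i • y)) j
        = ‖x‖⁻¹ * (Dv (EuclideanSpace.single i 1 - y i • y)) j := rfl
    rw [h3, h2, hxi]
    field_simp
    ring
  -- value of vE at x
  have hvEx : ∀ i : Fin 3, vE v x i = ‖x‖ * v y i := fun i => rfl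
  -- tangency sum
  have hS0 : v y 0 * y 0 + v y 1 * y 1 + v y 2 * y 2 = 0 := by
    have h := hvt y hny
    rw [inner_eq_sum, Fin.sum_univ_three] at h
    exact h
  -- norm squared
  have hna : ‖v y‖ ^ 2 = v y 0 * v y 0 + v y 1 * v y 1 + v y 2 * v y 2 := by
    rw [← real_inner_self_eq_norm_sq, inner_eq_sum, Fin.sum_univ_three]
  -- key identity
  have hkey : ((v y 0 * d 0 0 + v y 1 * d 1 0 + v y 2 * d 2 0) * y 0
      + (v y 0 * d 0 1 + v y 1 * d 1 1 + v y 2 * d 2 1) * y 1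
      + (v y 0 * d 0 2 + v y 1 * d 1 2 + v y 2 * d 2 2) * y 2)
      + (v y 0 * v y 0 + v y 1 * v y 1 + v y 2 * v y 2) = 0 := by
    have h := key_tangent v y hny hv hvt
    rw [inner_eq_sum, hna] at h
    rw [Fin.sum_univ_three] at h
    rw [hDlin (v y) 0, hDlin (v y) 1, hDlin (v y) 2] at h
    rw [Fin.sum_univ_three, Fin.sum_univ_three, Fin.sum_univ_three] at h
    exact h
  simp only [hD, hvEx, tgradM, gradM, proj3, Matrix.mul_apply, Matrix.of_apply, hcoordd]
  simp only [Fin.sum_univ_three]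
  rw [hna]
  clear_value y Dv d
  clear hD hvEx hcoordd hDlin hna hv hy hd hDv
  fin_cases j <;>
    simp only [Fin.zero_eta, Fin.mk_one, Fin.reduceFinMk, Fin.isValue, Fin.reduceEq,
      reduceIte, ite_true, ite_false, eq_self_iff_true, one_mul, mul_one, mul_zero, zero_mul,
      sub_zero, zero_sub, add_zero, zero_add]
  · linear_combination (‖x‖ * (v y 0 - y 0 * (y 0 * (y 0 * d 0 0 + y 1 * d 1 0 + y 2 * d 2 0) + y 1 * (y 0 * d 0 1 + y 1 * d 1 1 + y 2 * d 2 1) + y 2 * (y 0 * d 0 2 + y 1 * d 1 2 + y 2 * d 2 2)))) * hS0 + (‖x‖ * y 0) * hkey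
  · linear_combination (‖x‖ * (v y 1 - y 1 * (y 0 * (y 0 * d 0 0 + y 1 * d 1 0 + y 2 * d 2 0) + y 1 * (y 0 * d 0 1 + y 1 * d 1 1 + y 2 * d 2 1) + y 2 * (y 0 * d 0 2 + y 1 * d 1 2 + y 2 * d 2 2)))) * hS0 + (‖x‖ * y 1) * hkey
  · linear_combination (‖x‖ * (v y 2 - y 2 * (y 0 * (y 0 * d 0 0 + y 1 * d 1 0 + y 2 * d 2 0) + y 1 * (y 0 * d 0 1 + y 1 * d 1 1 + y 2 * d 2 1) + y 2 * (y 0 * d 0 2 + y 1 * d 1 2 + y 2 * d 2 2)))) * hS0 + (‖x‖ * y 2) * hkey
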